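/- Let p be an odd prime, g ≥ 1 with g ≤ (p−1)/2, 1 ≤ i, j ≤ g, and set d' = (p−1)(2g+1)/2 − ip + j, a' = g−j+1/2, c' = g−j+1. For any tuple (n₁,…,n_{2g−1}) of nonnegative integers with n_k ≤ (p−1)/2 for all k and d' − (p−1)/2 ≤ n₁+⋯+n_{2g−1} ≤ d', the rational number A = (a')_{|n|} · ∏_k (1/2)_{n_k} / ((c')_{|n|} · ∏_k n_k!) is a p-adic unit (in particular, its reduction mod p is a nonzero element of 𝔽_p). -/

import Mathlib

private lemma sum_range_two_mul {M : Type*} [AddCommMonoid M] (f : ℕ → M) (N : ℕ) :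
    ∑ u ∈ Finset.range (2 * N), f u = ∑ s ∈ Finset.range N, (f (2 * s) + f (2 * s + 1)) := by
  induction N with
  | zero => simp
  | succ N ih =>
    have h : 2 * (N + 1) = 2 * N + 1 + 1 := by ring
    rw [h, Finset.sum_range_succ, Finset.sum_range_succ, ih, Finset.sum_range_succ, add_assoc]

private lemma count_dvd_shift (p c N : ℕ) (hc : 1 ≤ c) (hcp : c ≤ p) :
    ((Finset.range N).filter (fun s => p ∣ (c + s))).card = (c + N - 1) / p := by
  induction N with
  | zero =>
    rw [Finset.range_zero, Finset.filter_empty, Finset.card_empty,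
      Nat.div_eq_of_lt (show c + 0 - 1 < p by omega)]
  | succ N ih =>
    rw [Finset.range_add_one, Finset.filter_insert]
    have h1 : c + (N + 1) - 1 = (c + N - 1) + 1 := by omega
    have h2 : c + N - 1 + 1 = c + N := by omega
    rw [h1, Nat.succ_div, h2]
    split_ifs with h
    · rw [Finset.card_insert_of_notMem (by simp), ih]
    · rw [ih, Nat.add_zero]

private lemma padicValNat_eq_ite (p : ℕ) [hp : Fact p.Prime] (x : ℕ) (hx : 0 < x)
    (hx2 : x < p * p) : padicValNat p x = if p ∣ x then 1 else 0 := by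
  have hp1 : 1 < p := hp.out.one_lt
  split_ifs with h
  · obtain ⟨t, rfl⟩ := h
    have ht : 0 < t := by
      rcases Nat.eq_zero_or_pos t with h0 | h0
      · simp [h0] at hx
      · exact h0
    have htp : t < p := Nat.lt_of_mul_lt_mul_left hx2
    have hnd : ¬ p ∣ t := fun hd => by have := Nat.le_of_dvd ht hd; omega
    rw [padicValNat.mul (by omega) (by omega), padicValNat.self hp1,
      padicValNat.eq_zero_of_not_dvd hnd]
  · exact padicValNat.eq_zero_of_not_dvd h

private lemma sum_padicValNat_shift (p c N : ℕ) [Fact p.Prime] (hc : 1 ≤ c) (hcp : c ≤ p)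
    (hbound : c + N - 1 < p * p) :
    ∑ s ∈ Finset.range N, padicValNat p (c + s) = (c + N - 1) / p := by
  rw [← count_dvd_shift p c N hc hcp, Finset.card_filter]
  refine Finset.sum_congr rfl fun s hs => ?_
  simp only [Finset.mem_range] at hs
  exact padicValNat_eq_ite p _ (by omega) (by omega)

private lemma padicValRat_prod {p : ℕ} [Fact p.Prime] {ι : Type*} (s : Finset ι) (f : ι → ℚ)
    (hf : ∀ i ∈ s, f i ≠ 0) :
    padicValRat p (∏ i ∈ s, f i) = ∑ i ∈ s, padicValRat p (f i) := by
  induction s using Finset.cons_induction with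
  | empty => simp
  | cons a s ha ih =>
    rw [Finset.prod_cons, Finset.sum_cons,
      padicValRat.mul (hf a (Finset.mem_cons_self a s))
        (Finset.prod_ne_zero_iff.mpr fun i hi => hf i (Finset.mem_cons_of_mem hi)),
      ih fun i hi => hf i (Finset.mem_cons_of_mem hi)]

set_option maxHeartbeats 1000000 in
/-- The coefficient `A^{(i,j)}_n = (a')_{|n|} ∏_k (1/2)_{n_k} / ((c')_{|n|} ∏_k n_k!)`
of the truncated Lauricella series, for `n` in the truncation range, is a `p`-adic unit. -/
theorem lauricella_coeff_padic_unit (p : ℕ) [hp : Fact p.Prime] (hodd : Odd p)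
    (g i j : ℕ) (hg1 : 1 ≤ g) (hg : g ≤ (p - 1) / 2)
    (hi1 : 1 ≤ i) (hig : i ≤ g) (hj1 : 1 ≤ j) (hjg : j ≤ g)
    (a' c' : ℚ) (d' : ℕ)
    (ha' : a' = (g : ℚ) - j + 1 / 2)
    (hc' : c' = (g : ℚ) - j + 1)
    (hd' : d' = (p - 1) * (2 * g + 1) / 2 - i * p + j)
    (n : Fin (2 * g - 1) → ℕ)
    (hnk : ∀ k, n k ≤ (p - 1) / 2)
    (hlo : d' - (p - 1) / 2 ≤ ∑ k, n k) (hhi : ∑ k, n k ≤ d')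
    (A : ℚ)
    (hA : A = (∏ s ∈ Finset.range (∑ k, n k), (a' + s))
            * (∏ k, ∏ s ∈ Finset.range (n k), ((1 : ℚ) / 2 + s))
            / ((∏ s ∈ Finset.range (∑ k, n k), (c' + s)) * ∏ k, ((n k).factorial : ℚ))) :
    padicValRat p A = 0 ∧ (A : ZMod p) ≠ 0 := by
  have hp2 : 2 ≤ p := hp.out.two_le
  have hpne2 : p ≠ 2 := by rintro rfl; simp [Nat.odd_iff] at hodd
  have hp3 : 3 ≤ p := by omega
  obtain ⟨r, hr⟩ := hodd
  set q := (p - 1) / 2 with hq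
  have hpq : p = 2 * q + 1 := by omega
  set N := ∑ k, n k with hN
  set m := g - j with hm
  have hmj : m + j = g := by omega
  -- unfold the natural-number division in `hd'`
  have hip : i * p ≤ q * (2 * g + 1) := by
    calc i * p ≤ g * (2 * q + 1) := by rw [← hpq]; exact Nat.mul_le_mul_right p hig
      _ ≤ q * (2 * g + 1) := by nlinarith
  have hd2 : d' + i * p = q * (2 * g + 1) + j := by
    have hdiv : (p - 1) * (2 * g + 1) / 2 = q * (2 * g + 1) := by
      have : (p - 1) * (2 * g + 1) = 2 * (q * (2 * g + 1)) := by rw [show p - 1 = 2 * q by omega]; ring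
      rw [this, Nat.mul_div_cancel_left _ (by norm_num)]
    rw [hd', hdiv]; omega
  have e1 : p * (g - i) + i * p = p * g := by
    rw [Nat.mul_comm i p, ← Nat.mul_add]; congr 1; omega
  have e2 : q * (2 * g + 1) = 2 * (q * g) + q := by ring
  have e3 : p * g = 2 * (q * g) + g := by rw [hpq]; ring
  have key : m + d' = p * (g - i) + q := by omega
  have hmN_le : m + N ≤ p * (g - i) + q := by omega
  have hmN_ge : p * (g - i) ≤ m + N := by omega
  have hgi : g - i ≤ p - 1 := by omega
  have e5 : p * (p - 1) + p = p * p := by zify [show (1:ℕ) ≤ p by omega]; ring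
  have hmulbig : p * (g - i) ≤ p * (p - 1) := Nat.mul_le_mul_left p hgi
  have e6 : p * (2 * (g - i)) = 2 * (p * (g - i)) := by ring
  have hgi2 : 2 * (g - i) ≤ p - 1 := by omega
  have hmulbig2 : p * (2 * (g - i)) ≤ p * (p - 1) := Nat.mul_le_mul_left p hgi2
  have div1 : (m + N) / p = g - i := by
    apply Nat.div_eq_of_lt_le
    · rw [Nat.mul_comm]; exact hmN_ge
    · calc m + N ≤ p * (g - i) + q := hmN_le
        _ < (g - i + 1) * p := by rw [Nat.add_mul, Nat.one_mul, Nat.mul_comm]; omega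
  have div2 : (2 * m + 2 * N) / p = 2 * (g - i) := by
    apply Nat.div_eq_of_lt_le
    · rw [Nat.mul_comm, e6]; omega
    · calc 2 * m + 2 * N ≤ 2 * (p * (g - i)) + 2 * q := by omega
        _ < (2 * (g - i) + 1) * p := by
            have e7 : (2 * (g - i) + 1) * p = 2 * (p * (g - i)) + p := by ring
            omega
  -- key valuation sums
  have S2 : ∑ s ∈ Finset.range N, padicValNat p (m + 1 + s) = g - i := by
    have := sum_padicValNat_shift p (m + 1) N (by omega) (by omega) (by omega)
    rwa [show m + 1 + N - 1 = m + N by omega, div1] at this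
  have SL : ∑ u ∈ Finset.range (2 * N), padicValNat p (2 * m + 1 + u) = 2 * (g - i) := by
    have := sum_padicValNat_shift p (2 * m + 1) (2 * N) (by omega) (by omega) (by omega)
    rwa [show 2 * m + 1 + 2 * N - 1 = 2 * m + 2 * N by omega, div2] at this
  have hpd2 : ¬ p ∣ 2 := fun hd => by have := Nat.le_of_dvd (by norm_num) hd; omega
  have S1 : ∑ s ∈ Finset.range N, padicValNat p (2 * m + 1 + 2 * s) = g - i := by
    have hsplit := sum_range_two_mul (fun u => padicValNat p (2 * m + 1 + u)) N
    rw [SL] at hsplit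
    have heven : ∀ s : ℕ, padicValNat p (2 * m + 1 + (2 * s + 1)) = padicValNat p (m + 1 + s) := by
      intro s
      rw [show 2 * m + 1 + (2 * s + 1) = 2 * (m + 1 + s) by ring,
        padicValNat.mul (by norm_num) (by omega), padicValNat.eq_zero_of_not_dvd hpd2, Nat.zero_add]
    simp only [heven] at hsplit
    rw [Finset.sum_add_distrib, S2] at hsplit
    omega
  -- rewrite the factors as casts of natural numbers
  have hma : ((m : ℚ)) = (g : ℚ) - j := by rw [hm, Nat.cast_sub hjg]
  have ha2 : ∀ s : ℕ, a' + s = ((2 * m + 1 + 2 * s : ℕ) : ℚ) / 2 := by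
    intro s; rw [ha', ← hma]; push_cast; ring
  have hc2 : ∀ s : ℕ, c' + s = ((m + 1 + s : ℕ) : ℚ) := by
    intro s; rw [hc', ← hma]; push_cast; ring
  have hhalf : ∀ s : ℕ, (1 : ℚ) / 2 + s = ((2 * s + 1 : ℕ) : ℚ) / 2 := by
    intro s; push_cast; ring
  have h2ne : (2 : ℚ) ≠ 0 := by norm_num
  -- valuation helpers
  have hv2 : padicValRat p 2 = 0 := by
    rw [show (2 : ℚ) = ((2 : ℕ) : ℚ) by norm_num, padicValRat.of_nat,
      padicValNat.eq_zero_of_not_dvd hpd2, Nat.cast_zero]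
  have hvhalf : ∀ x : ℕ, x ≠ 0 → padicValRat p ((x : ℚ) / 2) = padicValNat p x := by
    intro x hx
    rw [padicValRat.div (Nat.cast_ne_zero.mpr hx) h2ne, hv2, padicValRat.of_nat, sub_zero]
  -- positivity / nonvanishing of the four factors
  have hjq : (j : ℚ) ≤ g := Nat.cast_le.mpr hjg
  have hP1pos : 0 < ∏ s ∈ Finset.range N, (a' + s) := by
    refine Finset.prod_pos fun s _ => ?_
    have hs : (0 : ℚ) ≤ s := Nat.cast_nonneg s
    rw [ha']; linarith
  have hP2pos : 0 < ∏ k, ∏ s ∈ Finset.range (n k), ((1 : ℚ) / 2 + s) := by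
    refine Finset.prod_pos fun k _ => Finset.prod_pos fun s _ => ?_
    have hs : (0 : ℚ) ≤ s := Nat.cast_nonneg s
    linarith
  have hP3pos : 0 < ∏ s ∈ Finset.range N, (c' + s) := by
    refine Finset.prod_pos fun s _ => ?_
    have hs : (0 : ℚ) ≤ s := Nat.cast_nonneg s
    rw [hc']; linarith
  have hP4pos : 0 < ∏ k, (((n k).factorial : ℚ)) := by
    refine Finset.prod_pos fun k _ => ?_
    exact_mod_cast Nat.cast_pos.mpr (Nat.factorial_pos (n k))
  -- the four valuations
  have vP1 : padicValRat p (∏ s ∈ Finset.range N, (a' + s)) = ((g - i : ℕ) : ℤ) := by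
    rw [padicValRat_prod _ _ fun s _ => ne_of_gt (by
      have hs : (0 : ℚ) ≤ (s : ℚ) := Nat.cast_nonneg s
      rw [ha']; linarith)]
    rw [show ∑ s ∈ Finset.range N, padicValRat p (a' + s)
        = ∑ s ∈ Finset.range N, ((padicValNat p (2 * m + 1 + 2 * s) : ℤ)) from
      Finset.sum_congr rfl fun s _ => by rw [ha2 s, hvhalf _ (by omega)]]
    rw [← Nat.cast_sum, S1]
  have vP3 : padicValRat p (∏ s ∈ Finset.range N, (c' + s)) = ((g - i : ℕ) : ℤ) := by
    rw [padicValRat_prod _ _ fun s _ => ne_of_gt (by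
      have hs : (0 : ℚ) ≤ (s : ℚ) := Nat.cast_nonneg s
      rw [hc']; linarith)]
    rw [show ∑ s ∈ Finset.range N, padicValRat p (c' + s)
        = ∑ s ∈ Finset.range N, ((padicValNat p (m + 1 + s) : ℤ)) from
      Finset.sum_congr rfl fun s _ => by rw [hc2 s, padicValRat.of_nat]]
    rw [← Nat.cast_sum, S2]
  have vP2 : padicValRat p (∏ k, ∏ s ∈ Finset.range (n k), ((1 : ℚ) / 2 + s)) = 0 := by
    rw [padicValRat_prod _ _ fun k _ => ne_of_gt (Finset.prod_pos fun s _ => by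
      have hs : (0 : ℚ) ≤ (s : ℚ) := Nat.cast_nonneg s
      linarith)]
    refine Finset.sum_eq_zero fun k _ => ?_
    rw [padicValRat_prod _ _ fun s _ => ne_of_gt (by
      have hs : (0 : ℚ) ≤ (s : ℚ) := Nat.cast_nonneg s
      linarith)]
    refine Finset.sum_eq_zero fun s hs => ?_
    simp only [Finset.mem_range] at hs
    have hsq : s < q := lt_of_lt_of_le hs (hnk k)
    rw [hhalf s, hvhalf _ (by omega), padicValNat.eq_zero_of_not_dvd, Nat.cast_zero]
    intro hd
    have := Nat.le_of_dvd (by omega) hd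
    omega
  have vP4 : padicValRat p (∏ k, (((n k).factorial : ℚ))) = 0 := by
    rw [padicValRat_prod _ _ fun k _ => Nat.cast_ne_zero.mpr (Nat.factorial_ne_zero (n k))]
    refine Finset.sum_eq_zero fun k _ => ?_
    rw [padicValRat.of_nat, padicValNat.eq_zero_of_not_dvd, Nat.cast_zero]
    intro hd
    have := (Nat.Prime.dvd_factorial hp.out).mp hd
    have := hnk k
    omega
  have hP1ne := ne_of_gt hP1pos
  have hP2ne := ne_of_gt hP2pos
  have hP3ne := ne_of_gt hP3pos
  have hP4ne := ne_of_gt hP4pos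
  have hval : padicValRat p A = 0 := by
    rw [hA, padicValRat.div (mul_ne_zero hP1ne hP2ne) (mul_ne_zero hP3ne hP4ne),
      padicValRat.mul hP1ne hP2ne, padicValRat.mul hP3ne hP4ne, vP1, vP2, vP3, vP4]
    ring
  refine ⟨hval, ?_⟩
  -- the reduction mod `p` is nonzero
  have hAne : A ≠ 0 := by
    rw [hA]
    exact ne_of_gt (div_pos (mul_pos hP1pos hP2pos) (mul_pos hP3pos hP4pos))
  have hnum : A.num ≠ 0 := Rat.num_ne_zero.mpr hAne
  have hval' : padicValNat p A.num.natAbs = padicValNat p A.den := by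
    have h := padicValRat_def p A
    rw [hval] at h
    unfold padicValInt at h
    omega
  have hboth : ¬(p ∣ A.num.natAbs ∧ p ∣ A.den) := by
    rintro ⟨h1, h2⟩
    have hdg : p ∣ Nat.gcd A.num.natAbs A.den := Nat.dvd_gcd h1 h2
    rw [A.reduced] at hdg
    have := Nat.le_of_dvd (by norm_num) hdg
    omega
  have hpnum : ¬ (p : ℤ) ∣ A.num := by
    intro hd
    have h1 : p ∣ A.num.natAbs := Int.natCast_dvd.mp hd
    have h2 : 1 ≤ padicValNat p A.num.natAbs :=
      one_le_padicValNat_of_dvd (Int.natAbs_ne_zero.mpr hnum) h1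
    have h3 : p ∣ A.den :=
      (dvd_iff_padicValNat_ne_zero A.den_ne_zero).mpr (by rw [← hval']; omega)
    exact hboth ⟨h1, h3⟩
  have hpden : ¬ p ∣ A.den := by
    intro hd
    have h2 : 1 ≤ padicValNat p A.den := one_le_padicValNat_of_dvd A.den_ne_zero hd
    have h1 : p ∣ A.num.natAbs :=
      (dvd_iff_padicValNat_ne_zero (Int.natAbs_ne_zero.mpr hnum)).mpr (by omega)
    exact hboth ⟨h1, hd⟩
  rw [Rat.cast_def]
  apply div_ne_zero
  · rw [Ne, ZMod.intCast_zmod_eq_zero_iff_dvd]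
    exact hpnum
  · rw [Ne, ZMod.natCast_eq_zero_iff]
    exact hpden
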